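/- Let 𝓕 = Hom_Λ(F,−) be pro-representable and Γ ⊆ Aut_Λ(F) a subgroup, with quotient functor 𝓓 = 𝓕/Γ. Then for all morphisms A → B ← C in Art, the natural map 𝓓(A ×_B C) → 𝓓(A) ×_{𝓓(B)} 𝓓(C) is surjective. -/

import Mathlib

open IsLocalRing

universe u v

/-- An object of the category `Art` of Artinian local `Λ`-algebras with residue field
`k = Λ/m_Λ` (the augmentation is encoded by `resSurj`: every element is congruent to a
constant modulo the maximal ideal, so that `A/m_A ≅ k` canonically). -/
structure ArtAlg (Λ : Type u) [CommRing Λ] [IsLocalRing Λ] : Type (u + 1) where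
  carrier : Type u
  [cring : CommRing carrier]
  [alg : Algebra Λ carrier]
  [art : IsArtinianRing carrier]
  [loc : IsLocalRing carrier]
  [locHom : IsLocalHom (algebraMap Λ carrier)]
  resSurj : ∀ a : carrier, ∃ c : Λ, a - algebraMap Λ carrier c ∈ maximalIdeal carrier

attribute [instance] ArtAlg.cring ArtAlg.alg ArtAlg.art ArtAlg.loc ArtAlg.locHom

variable {Λ : Type u} [CommRing Λ] [IsLocalRing Λ]

/-- Morphisms in `Art`: local `Λ`-algebra homomorphisms (compatibility with the
augmentations is then automatic). -/
structure ArtHom (A B : ArtAlg Λ) where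
  toAlgHom : A.carrier →ₐ[Λ] B.carrier
  isLocal : IsLocalHom toAlgHom.toRingHom

def ArtHom.id (A : ArtAlg Λ) : ArtHom A A :=
  ⟨AlgHom.id Λ A.carrier, ⟨fun _ h => h⟩⟩

def ArtHom.comp {A B C : ArtAlg Λ} (g : ArtHom B C) (f : ArtHom A B) : ArtHom A C :=
  ⟨g.toAlgHom.comp f.toAlgHom, ⟨fun a h => f.isLocal.1 a (g.isLocal.1 (f.toAlgHom a) h)⟩⟩

/-- A covariant functor `Art → Sets`. -/
structure ArtFunctor (Λ : Type u) [CommRing Λ] [IsLocalRing Λ] : Type (u + 1) where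
  obj : ArtAlg Λ → Type u
  map : {A B : ArtAlg Λ} → ArtHom A B → obj A → obj B
  map_id : ∀ (A : ArtAlg Λ) (x : obj A), map (ArtHom.id A) x = x
  map_comp : ∀ {A B C : ArtAlg Λ} (f : ArtHom A B) (g : ArtHom B C) (x : obj A),
    map (g.comp f) x = map g (map f x)

/-- A natural transformation between functors `Art → Sets`. -/
structure ArtNatTrans (F G : ArtFunctor Λ) where
  app : ∀ A : ArtAlg Λ, F.obj A → G.obj A
  naturality : ∀ {A B : ArtAlg Λ} (f : ArtHom A B) (x : F.obj A),
    app B (F.map f x) = G.map f (app A x)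

/-- A complete Noetherian local `Λ`-algebra with residue field `k`,
a pro-representing object. -/
structure ProRepAlg (Λ : Type u) [CommRing Λ] [IsLocalRing Λ] : Type (u + 1) where
  carrier : Type u
  [cring : CommRing carrier]
  [alg : Algebra Λ carrier]
  [noeth : IsNoetherianRing carrier]
  [loc : IsLocalRing carrier]
  [locHom : IsLocalHom (algebraMap Λ carrier)]
  [complete : IsAdicComplete (maximalIdeal carrier) carrier]
  resSurj : ∀ a : carrier, ∃ c : Λ, a - algebraMap Λ carrier c ∈ maximalIdeal carrier

attribute [instance] ProRepAlg.cring ProRepAlg.alg ProRepAlg.noeth ProRepAlg.loc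
  ProRepAlg.locHom ProRepAlg.complete

/-- Local `Λ`-algebra homomorphisms `R → S`. -/
def LocHom (Λ : Type u) [CommRing Λ] (R S : Type u) [CommRing R] [CommRing S]
    [Algebra Λ R] [Algebra Λ S] [IsLocalRing R] [IsLocalRing S] : Type u :=
  {f : R →ₐ[Λ] S // IsLocalHom f.toRingHom}

/-- The pro-representable functor `h_F = Hom_Λ(F, -)`. -/
def hFunctor (F : ProRepAlg Λ) : ArtFunctor Λ where
  obj A := LocHom Λ F.carrier A.carrier
  map {A B} f x := ⟨f.toAlgHom.comp x.1, ⟨fun a h => x.2.1 a (f.isLocal.1 (x.1 a) h)⟩⟩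
  map_id A x := Subtype.ext (AlgHom.ext fun _ => rfl)
  map_comp f g x := Subtype.ext (AlgHom.ext fun _ => rfl)

/-- An algebra automorphism of `F`, as a ring hom, is a local homomorphism. -/
theorem AlgEquiv.isLocalHom_toRingHom {F : ProRepAlg Λ} (g : F.carrier ≃ₐ[Λ] F.carrier) :
    IsLocalHom ((g : F.carrier →ₐ[Λ] F.carrier).toRingHom) :=
  ⟨fun a h => by simpa using h.map g.symm.toAlgHom.toRingHom⟩

/-- Precomposition of an element of `h_F(A) = Hom_Λ(F, A)` with a local endomorphism
`g : F → F`; this is the value on `A` of the natural transformation `h_F → h_F`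
induced by `g`. -/
def precompEnd {F : ProRepAlg Λ} {A : ArtAlg Λ} (g : LocHom Λ F.carrier F.carrier)
    (z : (hFunctor F).obj A) : (hFunctor F).obj A :=
  ⟨z.1.comp g.1, ⟨fun a h => g.2.1 a (z.2.1 (g.1 a) h)⟩⟩

/-- Precomposition action of `Aut_Λ(F)` on `h_F(A) = Hom_Λ(F, A)`. -/
def precompAut {F : ProRepAlg Λ} {A : ArtAlg Λ} (g : F.carrier ≃ₐ[Λ] F.carrier)
    (x : (hFunctor F).obj A) : (hFunctor F).obj A :=
  ⟨x.1.comp g.toAlgHom, ⟨fun a h => (AlgEquiv.isLocalHom_toRingHom g).1 a (x.2.1 _ h)⟩⟩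

/-- The orbit equivalence relation of `Γ ⊆ Aut_Λ(F)` on `h_F(A)`. -/
def orbitSetoid (F : ProRepAlg Λ) (Γ : Subgroup (F.carrier ≃ₐ[Λ] F.carrier))
    (A : ArtAlg Λ) : Setoid ((hFunctor F).obj A) where
  r x y := ∃ g ∈ Γ, precompAut g x = y
  iseqv := by
    constructor
    · exact fun x => ⟨1, Γ.one_mem, Subtype.ext (AlgHom.ext fun a => rfl)⟩
    · rintro x y ⟨g, hg, rfl⟩
      exact ⟨g⁻¹, Γ.inv_mem hg, Subtype.ext (AlgHom.ext fun a =>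
        show x.1 (g (g.symm a)) = x.1 a by rw [g.apply_symm_apply])⟩
    · rintro x y z ⟨g, hg, rfl⟩ ⟨h, hh, rfl⟩
      exact ⟨g * h, Γ.mul_mem hg hh, Subtype.ext (AlgHom.ext fun a => rfl)⟩

/-- The quotient functor `𝓕/Γ`. -/
def quotFunctor (F : ProRepAlg Λ) (Γ : Subgroup (F.carrier ≃ₐ[Λ] F.carrier)) :
    ArtFunctor Λ where
  obj A := Quotient (orbitSetoid F Γ A)
  map {A B} f := Quotient.map ((hFunctor F).map f) (by
    rintro x y ⟨g, hg, rfl⟩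
    exact ⟨g, hg, Subtype.ext (AlgHom.ext fun a => rfl)⟩)
  map_id A := by
    rintro ⟨x⟩
    exact congrArg (Quotient.mk _) ((hFunctor F).map_id A x)
  map_comp f g := by
    rintro ⟨x⟩
    exact congrArg (Quotient.mk _) ((hFunctor F).map_comp f g x)

/-- The quotient map `q : 𝓕 → 𝓕/Γ`. -/
def quotMap (F : ProRepAlg Λ) (Γ : Subgroup (F.carrier ≃ₐ[Λ] F.carrier)) :
    ArtNatTrans (hFunctor F) (quotFunctor F Γ) where
  app A := Quotient.mk _
  naturality f x := rfl

/-- Formal smoothness of a natural transformation `q : 𝓕 → 𝓓`: for every surjection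
`π : A ↠ B` in `Art`, the induced map `𝓕(A) → 𝓕(B) ×_{𝓓(B)} 𝓓(A)` is surjective. -/
def FormallySmooth' {𝓕 𝓓 : ArtFunctor Λ} (q : ArtNatTrans 𝓕 𝓓) : Prop :=
  ∀ {A B : ArtAlg Λ} (π : ArtHom A B), Function.Surjective π.toAlgHom →
    ∀ (b : 𝓕.obj B) (d : 𝓓.obj A), q.app B b = 𝓓.map π d →
      ∃ a : 𝓕.obj A, 𝓕.map π a = b ∧ q.app A a = d

/-- `A` is of the form `k[V]` for a `k`-vector space `V`: the maximal ideal is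
square-zero and `m_Λ A = 0`. -/
def IsKV (A : ArtAlg Λ) : Prop :=
  maximalIdeal A.carrier ^ 2 = ⊥ ∧
    Ideal.map (algebraMap Λ A.carrier) (maximalIdeal Λ) = ⊥

/-- `A` is (isomorphic to) `k[ε] = k[t]/t²`: it is a `k[V]` with one-dimensional
maximal ideal. -/
def IsDualNumbers (A : ArtAlg Λ) : Prop :=
  IsKV A ∧ ∃ t : A.carrier, t ≠ 0 ∧ maximalIdeal A.carrier = Ideal.span {t}

/-- `𝓓` has a hull: a formally smooth natural transformation `h_F → 𝓓` which is
bijective on all rings `k[V]`. -/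
def HasHull (𝓓 : ArtFunctor Λ) : Prop :=
  ∃ (F : ProRepAlg Λ) (α : ArtNatTrans (hFunctor F) 𝓓), FormallySmooth' α ∧
    ∀ A : ArtAlg Λ, IsKV A → Function.Bijective (α.app A)

/-- `(R, p, q)` is the fibre product `A ×_B C` of `f : A → B` and `g : C → B`. -/
def IsFibreProduct {A B C R : ArtAlg Λ} (f : ArtHom A B) (g : ArtHom C B)
    (p : ArtHom R A) (q : ArtHom R C) : Prop :=
  (∀ r : R.carrier, f.toAlgHom (p.toAlgHom r) = g.toAlgHom (q.toAlgHom r)) ∧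
    ∀ (a : A.carrier) (c : C.carrier), f.toAlgHom a = g.toAlgHom c →
      ∃! r : R.carrier, p.toAlgHom r = a ∧ q.toAlgHom r = c

/-- `g` acts trivially on the tangent space `TF = Hom_k(m_F/(m_F² + m_Λ F), k)`,
i.e. it is the identity on the cotangent space `m_F/(m_F² + m_Λ F)`. -/
def ActsTriviallyOnTangent (F : ProRepAlg Λ) (g : F.carrier ≃ₐ[Λ] F.carrier) : Prop :=
  ∀ x ∈ maximalIdeal F.carrier,
    g x - x ∈ maximalIdeal F.carrier ^ 2 ⊔
      Ideal.map (algebraMap Λ F.carrier) (maximalIdeal Λ)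


/-- For `𝓓 = 𝓕/Γ`, the map `𝓓(A ×_B C) → 𝓓(A) ×_{𝓓(B)} 𝓓(C)`
is surjective. -/
theorem quotFunctor_fibreProduct_surjective {Λ : Type u} [CommRing Λ] [IsLocalRing Λ] [IsNoetherianRing Λ]
    [IsAdicComplete (maximalIdeal Λ) Λ]
    (F : ProRepAlg Λ) (Γ : Subgroup (F.carrier ≃ₐ[Λ] F.carrier)) :
    ∀ {A B C R : ArtAlg Λ} (f : ArtHom A B) (g : ArtHom C B)
      (p : ArtHom R A) (q : ArtHom R C), IsFibreProduct f g p q →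
      ∀ (dA : (quotFunctor F Γ).obj A) (dC : (quotFunctor F Γ).obj C),
        (quotFunctor F Γ).map f dA = (quotFunctor F Γ).map g dC →
        ∃ dR : (quotFunctor F Γ).obj R, (quotFunctor F Γ).map p dR = dA ∧ (quotFunctor F Γ).map q dR = dC := by
  intro A B C R f g p q hfib dA dC hEq
  obtain ⟨x, rfl⟩ := Quotient.exists_rep dA
  obtain ⟨y, rfl⟩ := Quotient.exists_rep dC
  have hEq' : (Quotient.mk _ ((hFunctor F).map f x) : Quotient (orbitSetoid F Γ B)) =
      Quotient.mk _ ((hFunctor F).map g y) := hEq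
  obtain ⟨γ, hγ, hγeq⟩ := Quotient.exact hEq'
  set x' : (hFunctor F).obj A := precompAut γ x with hx'
  have hpt : ∀ a : F.carrier, f.toAlgHom (x'.1 a) = g.toAlgHom (y.1 a) := by
    intro a
    have := congrArg (fun z : (hFunctor F).obj B => z.1 a) hγeq
    simpa [hx', precompAut, hFunctor] using this
  -- construct z : F → R via the universal property
  have hex : ∀ a : F.carrier, ∃! r : R.carrier,
      p.toAlgHom r = x'.1 a ∧ q.toAlgHom r = y.1 a :=
    fun a => hfib.2 (x'.1 a) (y.1 a) (hpt a)
  let z : F.carrier → R.carrier := fun a => (hex a).choose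
  have hz : ∀ a, p.toAlgHom (z a) = x'.1 a ∧ q.toAlgHom (z a) = y.1 a :=
    fun a => (hex a).choose_spec.1
  have huniq : ∀ (a : F.carrier) (r : R.carrier),
      p.toAlgHom r = x'.1 a ∧ q.toAlgHom r = y.1 a → r = z a :=
    fun a r h => (hex a).choose_spec.2 r h
  have hadd : ∀ a b, z (a + b) = z a + z b := fun a b =>
    ((hex (a+b)).choose_spec.2 (z a + z b)
      ⟨by rw [map_add, (hz a).1, (hz b).1, map_add],
       by rw [map_add, (hz a).2, (hz b).2, map_add]⟩).symm
  have hmul : ∀ a b, z (a * b) = z a * z b := fun a b =>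
    ((hex (a*b)).choose_spec.2 (z a * z b)
      ⟨by rw [map_mul, (hz a).1, (hz b).1, map_mul],
       by rw [map_mul, (hz a).2, (hz b).2, map_mul]⟩).symm
  have hone : z 1 = 1 :=
    ((hex 1).choose_spec.2 1 ⟨by simp, by simp⟩).symm
  have hzero : z 0 = 0 :=
    ((hex 0).choose_spec.2 0 ⟨by simp, by simp⟩).symm
  have hcomm : ∀ c : Λ, z (algebraMap Λ F.carrier c) = algebraMap Λ R.carrier c := fun c =>
    ((hex (algebraMap Λ F.carrier c)).choose_spec.2 (algebraMap Λ R.carrier c)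
      ⟨by rw [p.toAlgHom.commutes, x'.1.commutes],
       by rw [q.toAlgHom.commutes, y.1.commutes]⟩).symm
  let zAlg : F.carrier →ₐ[Λ] R.carrier :=
    { toFun := z, map_one' := hone, map_mul' := hmul, map_zero' := hzero,
      map_add' := hadd, commutes' := hcomm }
  have zLoc : IsLocalHom zAlg.toRingHom := by
    constructor
    intro a ha
    have : IsUnit (x'.1 a) := by
      rw [← (hz a).1]; exact ha.map p.toAlgHom.toRingHom
    exact x'.2.1 a this
  refine ⟨Quotient.mk _ ⟨zAlg, zLoc⟩, ?_, ?_⟩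
  · have h1 : (hFunctor F).map p ⟨zAlg, zLoc⟩ = x' := by
      apply Subtype.ext; apply AlgHom.ext; intro a
      exact (hz a).1
    calc @id (Quotient (orbitSetoid F Γ A)) ((quotFunctor F Γ).map p (Quotient.mk _ ⟨zAlg, zLoc⟩))
        = Quotient.mk _ ((hFunctor F).map p ⟨zAlg, zLoc⟩) := rfl
      _ = Quotient.mk _ x' := by rw [h1]
      _ = Quotient.mk _ x := Quotient.sound ⟨γ⁻¹, Γ.inv_mem hγ, by
          apply Subtype.ext; apply AlgHom.ext; intro a
          show x.1 (γ (γ.symm a)) = x.1 a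
          rw [γ.apply_symm_apply]⟩
  · have h2 : (hFunctor F).map q ⟨zAlg, zLoc⟩ = y := by
      apply Subtype.ext; apply AlgHom.ext; intro a
      exact (hz a).2
    calc @id (Quotient (orbitSetoid F Γ C)) ((quotFunctor F Γ).map q (Quotient.mk _ ⟨zAlg, zLoc⟩))
        = Quotient.mk _ ((hFunctor F).map q ⟨zAlg, zLoc⟩) := rfl
      _ = Quotient.mk _ y := by rw [h2]
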